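/- Let G be an abelian group that is a direct sum G = ⊕_{i∈I} G_i, with coordinate projections π_i : G → G_i, and let H be a characteristic subgroup of G. Then the subgroup ⊕_{i∈I} π_i(H) is also a characteristic subgroup of G. -/

import Mathlib

section Aux

variable {ι : Type*} [DecidableEq ι] {G : ι → Type*} [∀ i, AddCommGroup (G i)]

/-- The shear automorphism `x ↦ x + single j (f (x i))` for `j ≠ i`. -/
private def stmt4Shear (i j : ι) (hij : j ≠ i) (f : G i →+ G j) :
    (Π₀ i, G i) ≃+ (Π₀ i, G i) where
  toFun x := x + DFinsupp.single j (f (x i))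
  invFun x := x - DFinsupp.single j (f (x i))
  left_inv x := by
    have h : (x + DFinsupp.single j (f (x i))) i = x i := by
      simp [DFinsupp.single_eq_of_ne hij.symm]
    simp only [h]; abel
  right_inv x := by
    have h : (x - DFinsupp.single j (f (x i))) i = x i := by
      simp [DFinsupp.single_eq_of_ne hij.symm]
    simp only [h]; abel
  map_add' x y := by
    simp only [DFinsupp.add_apply, map_add, DFinsupp.single_add]; abel

private lemma stmt4_shear_mem (H : AddSubgroup (Π₀ i, G i))
    (hH : ∀ φ : (Π₀ i, G i) ≃+ (Π₀ i, G i), ∀ x ∈ H, φ x ∈ H)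
    {i j : ι} (hij : j ≠ i) (f : G i →+ G j) {h : Π₀ i, G i} (hh : h ∈ H) :
    DFinsupp.single j (f (h i)) ∈ H := by
  have key := hH (stmt4Shear i j hij f) h hh
  have h2 : (stmt4Shear i j hij f) h = h + DFinsupp.single j (f (h i)) := rfl
  rw [h2] at key
  simpa [add_sub_cancel_left] using H.sub_mem key hh

private lemma stmt4_compL (H : AddSubgroup (Π₀ i, G i))
    (hH : ∀ φ : (Π₀ i, G i) ≃+ (Π₀ i, G i), ∀ x ∈ H, φ x ∈ H)
    (φ : (Π₀ i, G i) ≃+ (Π₀ i, G i)) (i : ι) (y : Π₀ i, G i) :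
    y i = 0 → (∀ j, y j ∈ H.map (DFinsupp.evalAddMonoidHom j)) →
      (φ y) i ∈ H.map (DFinsupp.evalAddMonoidHom i) := by
  induction y using DFinsupp.induction with
  | h0 => intro _ _; simpa using (H.map (DFinsupp.evalAddMonoidHom i)).zero_mem
  | ha j a rest hrj ha ih =>
    intro hyi hyj
    have hji : j ≠ i := by
      rintro rfl
      rw [DFinsupp.add_apply, DFinsupp.single_eq_same, hrj, add_zero] at hyi
      exact ha hyi
    have hresti : rest i = 0 := by
      have := hyi
      rwa [DFinsupp.add_apply, DFinsupp.single_eq_of_ne hji.symm, zero_add] at this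
    have hrestj : ∀ k, rest k ∈ H.map (DFinsupp.evalAddMonoidHom k) := by
      intro k
      by_cases hkj : k = j
      · subst hkj; rw [hrj]; exact zero_mem _
      · have := hyj k
        rwa [DFinsupp.add_apply, DFinsupp.single_eq_of_ne hkj, zero_add] at this
    have haj : a ∈ H.map (DFinsupp.evalAddMonoidHom j) := by
      have := hyj j
      rwa [DFinsupp.add_apply, DFinsupp.single_eq_same, hrj, add_zero] at this
    obtain ⟨h, hh, hhj⟩ := haj
    have hfirst : (φ (DFinsupp.single j a)) i ∈ H.map (DFinsupp.evalAddMonoidHom i) := by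
      set g : G j →+ G i :=
        (DFinsupp.evalAddMonoidHom i).comp (φ.toAddMonoidHom.comp (DFinsupp.singleAddHom G j))
        with hg
      have hmem : DFinsupp.single i (g (h j)) ∈ H := stmt4_shear_mem H hH (Ne.symm hji) g hh
      refine ⟨DFinsupp.single i (g (h j)), hmem, ?_⟩
      have hha : h j = a := hhj
      show (DFinsupp.single i (g (h j))) i = (φ (DFinsupp.single j a)) i
      rw [DFinsupp.single_eq_same]
      show (φ (DFinsupp.single j (h j))) i = (φ (DFinsupp.single j a)) i
      rw [hha]
    have hsecond := ih hresti hrestj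
    have : (φ (DFinsupp.single j a + rest)) i
        = (φ (DFinsupp.single j a)) i + (φ rest) i := by
      rw [map_add, DFinsupp.add_apply]
    rw [this]
    exact AddSubgroup.add_mem _ hfirst hsecond

private lemma stmt4_memK_iff (H : AddSubgroup (Π₀ i, G i)) (x : Π₀ i, G i) :
    x ∈ (⨆ i : ι, H.map ((DFinsupp.singleAddHom G i).comp (DFinsupp.evalAddMonoidHom i))) ↔
      ∀ j, x j ∈ H.map (DFinsupp.evalAddMonoidHom j) := by
  constructor
  · intro hx
    refine AddSubgroup.iSup_induction
      (C := fun z => ∀ j, z j ∈ H.map (DFinsupp.evalAddMonoidHom j)) _ hx ?_ ?_ ?_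
    · rintro i z ⟨h, hh, rfl⟩ j
      show (DFinsupp.single i (h i)) j ∈ _
      by_cases hji : j = i
      · subst hji
        rw [DFinsupp.single_eq_same]
        exact ⟨h, hh, rfl⟩
      · rw [DFinsupp.single_eq_of_ne hji]
        exact zero_mem _
    · intro j; simp only [DFinsupp.zero_apply]; exact zero_mem _
    · intro a b ha hb j
      rw [DFinsupp.add_apply]; exact AddSubgroup.add_mem _ (ha j) (hb j)
  · induction x using DFinsupp.induction with
    | h0 => intro _; exact zero_mem _
    | ha j a rest hrj ha ih =>
      intro hx
      have hrestj : ∀ k, rest k ∈ H.map (DFinsupp.evalAddMonoidHom k) := by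
        intro k
        by_cases hkj : k = j
        · subst hkj; rw [hrj]; exact zero_mem _
        · have := hx k
          rwa [DFinsupp.add_apply, DFinsupp.single_eq_of_ne hkj, zero_add] at this
      refine AddSubgroup.add_mem _ ?_ (ih hrestj)
      have haj : a ∈ H.map (DFinsupp.evalAddMonoidHom j) := by
        have := hx j
        rwa [DFinsupp.add_apply, DFinsupp.single_eq_same, hrj, add_zero] at this
      obtain ⟨h, hh, hhj⟩ := haj
      refine AddSubgroup.mem_iSup_of_mem j ⟨h, hh, ?_⟩
      have hha : h j = a := hhj
      show DFinsupp.single j (h j) = DFinsupp.single j a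
      rw [hha]

end Aux

/-- If `G = ⨁_{i∈I} G_i` with coordinate projections `π_i` and `H` is a
characteristic subgroup of `G`, then `⨁_{i∈I} π_i(H)` is characteristic in `G`. -/
theorem stmt4 {ι : Type*} [DecidableEq ι] (G : ι → Type*) [∀ i, AddCommGroup (G i)]
    (H : AddSubgroup (Π₀ i, G i))
    (hH : ∀ φ : (Π₀ i, G i) ≃+ (Π₀ i, G i), ∀ x ∈ H, φ x ∈ H) :
    ∀ φ : (Π₀ i, G i) ≃+ (Π₀ i, G i),
      ∀ x ∈ ⨆ i : ι, H.map ((DFinsupp.singleAddHom G i).comp (DFinsupp.evalAddMonoidHom i)),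
        φ x ∈ ⨆ i : ι, H.map ((DFinsupp.singleAddHom G i).comp (DFinsupp.evalAddMonoidHom i)) := by
  intro φ x hx
  rw [stmt4_memK_iff] at hx ⊢
  intro k
  obtain ⟨h, hh, hhk⟩ := hx k
  have hhk' : h k = x k := hhk
  -- x = single k (x k) + erase k x
  have hxdec : DFinsupp.single k (x k) + DFinsupp.erase k x = x :=
    DFinsupp.single_add_erase k x
  have hhdec : DFinsupp.single k (h k) + DFinsupp.erase k h = h :=
    DFinsupp.single_add_erase k h
  have heraseP : ∀ z : Π₀ i, G i, (∀ j, z j ∈ H.map (DFinsupp.evalAddMonoidHom j)) →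
      (φ (DFinsupp.erase k z)) k ∈ H.map (DFinsupp.evalAddMonoidHom k) := by
    intro z hz
    refine stmt4_compL H hH φ k _ (by simp) ?_
    intro j
    by_cases hjk : j = k
    · subst hjk; simp only [DFinsupp.erase_same]; exact zero_mem _
    · rw [DFinsupp.erase_ne hjk]; exact hz j
  have hHcomp : ∀ j, h j ∈ H.map (DFinsupp.evalAddMonoidHom j) := fun j => ⟨h, hh, rfl⟩
  have key : (φ x) k
      = (φ h) k - (φ (DFinsupp.erase k h)) k + (φ (DFinsupp.erase k x)) k := by
    have e1 : DFinsupp.single k (x k) = h - DFinsupp.erase k h := by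
      rw [← hhk']; exact eq_sub_of_add_eq hhdec
    calc (φ x) k = (φ (DFinsupp.single k (x k) + DFinsupp.erase k x)) k := by rw [hxdec]
      _ = (φ (DFinsupp.single k (x k))) k + (φ (DFinsupp.erase k x)) k := by
          rw [map_add, DFinsupp.add_apply]
      _ = (φ h) k - (φ (DFinsupp.erase k h)) k + (φ (DFinsupp.erase k x)) k := by
          rw [e1, map_sub, DFinsupp.sub_apply]
  rw [key]
  refine AddSubgroup.add_mem _ (AddSubgroup.sub_mem _ ⟨φ h, hH φ h hh, rfl⟩ ?_) (heraseP x hx)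
  exact heraseP h hHcomp
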